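/- Let n ≥ 1, let C be a real n × n matrix, and let ε > 0. Let P⁰ be the unique minimizer over the transport polytope Π_n of J_ε(P) = ∑_{i,j} C_{ij} P_{ij} − ε H(P), where H(P) = −∑_{i,j} P_{ij} log P_{ij}. Then there exist vectors u, v ∈ ℝ^n with strictly positive entries such that P⁰_{ij} = u_i · exp(−C_{ij}/ε) · v_j for all i, j. -/

import Mathlib

open scoped BigOperators

/-- The transport polytope: `n × n` matrices with nonnegative entries whose
every row sum and every column sum equals `1/n`. -/
def transportPolytope (n : ℕ) : Set (Matrix (Fin n) (Fin n) ℝ) :=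
  {P | (∀ i j, 0 ≤ P i j) ∧ (∀ i, ∑ j, P i j = 1 / n) ∧ (∀ j, ∑ i, P i j = 1 / n)}

/-- The entropy of a matrix, `H(P) = -∑ P_{ij} log P_{ij}` (with `0 log 0 = 0`,
as `Real.log 0 = 0`). -/
noncomputable def matrixEntropy {n : ℕ} (P : Matrix (Fin n) (Fin n) ℝ) : ℝ :=
  -∑ i, ∑ j, P i j * Real.log (P i j)

/-- The minimizer of the entropic regularized optimal transport problem has the
diagonal-scaling (Sinkhorn) form `P⁰_{ij} = u_i exp(-C_{ij}/ε) v_j` with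
positive vectors `u`, `v`. -/
theorem entropic_ot_sinkhorn_form (n : ℕ) (hn : 1 ≤ n)
    (C : Matrix (Fin n) (Fin n) ℝ) (ε : ℝ) (hε : 0 < ε)
    (P0 : Matrix (Fin n) (Fin n) ℝ) (hP0mem : P0 ∈ transportPolytope n)
    (hP0min : ∀ P ∈ transportPolytope n,
      (∑ i, ∑ j, C i j * P0 i j) - ε * matrixEntropy P0 ≤
        (∑ i, ∑ j, C i j * P i j) - ε * matrixEntropy P) :
    ∃ u v : Fin n → ℝ, (∀ i, 0 < u i) ∧ (∀ j, 0 < v j) ∧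
      ∀ i j, P0 i j = u i * Real.exp (-C i j / ε) * v j := by
  have hJ : ∀ P : Matrix (Fin n) (Fin n) ℝ,
      (∑ i, ∑ j, C i j * P i j) - ε * matrixEntropy P
        = ∑ i, ∑ j, (C i j * P i j + ε * (P i j * Real.log (P i j))) := by
    intro P; simp [matrixEntropy, Finset.sum_add_distrib, Finset.mul_sum]
  obtain ⟨hnn0, hrow, hcol⟩ := hP0mem
  -- Step 1: strict positivity of the minimizer
  have hpos : ∀ a b, 0 < P0 a b := by
    have hJ : ∀ P : Matrix (Fin n) (Fin n) ℝ,
        (∑ i, ∑ j, C i j * P i j) - ε * matrixEntropy P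
          = ∑ i, ∑ j, (C i j * P i j + ε * (P i j * Real.log (P i j))) := by
      intro P; simp [matrixEntropy, Finset.sum_add_distrib, Finset.mul_sum]
    have hn0 : (0:ℝ) < n := by exact_mod_cast Nat.lt_of_lt_of_le Nat.zero_lt_one hn
    set u : ℝ := 1 / (n * n) with hu_def
    have hu : 0 < u := by positivity
    by_contra h; push_neg at h; obtain ⟨a, b, hab⟩ := h
    have hab0 : P0 a b = 0 := le_antisymm hab (hnn0 a b)
    set A : ℝ := (∑ i, ∑ j, C i j * (u - P0 i j))
        + ε * ∑ i, ∑ j, (u * Real.log u - P0 i j * Real.log (P0 i j)) with hA_def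
    set t : ℝ := min (1/2) (Real.exp (-(A + 1) / (ε * u))) with ht_def
    have ht0 : 0 < t := lt_min (by norm_num) (Real.exp_pos _)
    have ht1 : t ≤ 1 := le_trans (min_le_left _ _) (by norm_num)
    set Q : Matrix (Fin n) (Fin n) ℝ := Matrix.of fun i j => (1 - t) * P0 i j + t * u with hQ_def
    have hQentry : ∀ i j, Q i j = (1 - t) * P0 i j + t * u := fun i j => rfl
    have hQmem : Q ∈ transportPolytope n := by
      refine ⟨fun i j => ?_, fun i => ?_, fun j => ?_⟩
      · have := hnn0 i j
        have h1t : 0 ≤ 1 - t := by linarith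
        rw [hQentry]; positivity
      · simp only [hQentry, Finset.sum_add_distrib, ← Finset.mul_sum, hrow i,
          Finset.sum_const, Finset.card_univ, Fintype.card_fin, nsmul_eq_mul]
        rw [hu_def]
        field_simp
        ring
      · simp only [hQentry, Finset.sum_add_distrib, ← Finset.mul_sum, hcol j,
          Finset.sum_const, Finset.card_univ, Fintype.card_fin, nsmul_eq_mul]
        rw [hu_def]
        field_simp
        ring
    -- pointwise entropy bound
    have hψ : ∀ i j, Q i j * Real.log (Q i j) ≤
        P0 i j * Real.log (P0 i j) + t * (u * Real.log u - P0 i j * Real.log (P0 i j))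
          + (if i = a then if j = b then t * u * Real.log t else 0 else 0) := by
      intro i j
      by_cases hia : i = a
      · by_cases hjb : j = b
        · subst hia; subst hjb
          rw [hQentry, hab0]
          simp only [mul_zero, zero_mul, zero_add, sub_zero, if_pos rfl]
          simp only [if_true]
          rw [Real.log_mul ht0.ne' hu.ne']
          apply le_of_eq
          ring
        · simp only [if_neg hjb, if_pos hia, add_zero]
          have hc := Real.convexOn_mul_log.2 (Set.mem_Ici.2 (hnn0 i j)) (Set.mem_Ici.2 hu.le)
            (by linarith : (0:ℝ) ≤ 1 - t) ht0.le (by ring)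
          simp only [smul_eq_mul] at hc
          rw [hQentry]
          calc ((1-t) * P0 i j + t * u) * Real.log ((1-t) * P0 i j + t * u)
              ≤ (1-t) * (P0 i j * Real.log (P0 i j)) + t * (u * Real.log u) := hc
            _ = P0 i j * Real.log (P0 i j) + t * (u * Real.log u - P0 i j * Real.log (P0 i j)) := by ring
      · simp only [if_neg hia, add_zero]
        have hc := Real.convexOn_mul_log.2 (Set.mem_Ici.2 (hnn0 i j)) (Set.mem_Ici.2 hu.le)
          (by linarith : (0:ℝ) ≤ 1 - t) ht0.le (by ring)
        simp only [smul_eq_mul] at hc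
        rw [hQentry]
        calc ((1-t) * P0 i j + t * u) * Real.log ((1-t) * P0 i j + t * u)
            ≤ (1-t) * (P0 i j * Real.log (P0 i j)) + t * (u * Real.log u) := hc
          _ = P0 i j * Real.log (P0 i j) + t * (u * Real.log u - P0 i j * Real.log (P0 i j)) := by ring
    have hsum : (∑ i, ∑ j, (C i j * Q i j + ε * (Q i j * Real.log (Q i j))))
        ≤ (∑ i, ∑ j, (C i j * P0 i j + ε * (P0 i j * Real.log (P0 i j))))
          + t * A + ε * (t * u * Real.log t) := by
      have step : (∑ i, ∑ j, (C i j * Q i j + ε * (Q i j * Real.log (Q i j))))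
          ≤ ∑ i, ∑ j, ((C i j * P0 i j + ε * (P0 i j * Real.log (P0 i j)))
              + (t * (C i j * (u - P0 i j))
                + ε * (t * (u * Real.log u - P0 i j * Real.log (P0 i j)))
                + ε * (if i = a then if j = b then t * u * Real.log t else 0 else 0))) := by
        refine Finset.sum_le_sum fun i _ => Finset.sum_le_sum fun j _ => ?_
        have h2 := mul_le_mul_of_nonneg_left (hψ i j) hε.le
        have h3 : C i j * Q i j = C i j * P0 i j + t * (C i j * (u - P0 i j)) := by
          rw [hQentry]; ring
        rw [h3]
        rw [mul_add, mul_add] at h2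
        linarith
      refine step.trans (le_of_eq ?_)
      have hite : ∀ c : ℝ, (∑ i : Fin n, ∑ j : Fin n,
          (if i = a then if j = b then c else 0 else 0)) = c := by
        intro c
        rw [Finset.sum_eq_single a]
        · simp
        · intro i _ hia; simp [hia]
        · intro h; exact absurd (Finset.mem_univ a) h
      simp only [Finset.sum_add_distrib, ← Finset.mul_sum]
      rw [hite, hA_def]
      ring
    have hfin := hP0min Q hQmem
    rw [hJ, hJ] at hfin
    have hlog1 : Real.log t ≤ -(A + 1) / (ε * u) := by
      calc Real.log t ≤ Real.log (Real.exp (-(A + 1) / (ε * u))) :=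
            Real.log_le_log ht0 (min_le_right _ _)
        _ = -(A + 1) / (ε * u) := Real.log_exp _
    have hεu : 0 < ε * u := mul_pos hε hu
    have hlog2 : ε * u * Real.log t ≤ -(A + 1) := by
      have h4 := mul_le_mul_of_nonneg_left hlog1 hεu.le
      have h5 : ε * u * (-(A + 1) / (ε * u)) = -(A + 1) := by field_simp
      linarith
    have hneg : t * A + ε * (t * u * Real.log t) < 0 := by
      have h6 : A + ε * u * Real.log t ≤ -1 := by linarith
      have h7 := mul_le_mul_of_nonneg_left h6 ht0.le
      nlinarith
    linarith
  -- objective in convenient form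
  have hmin : ∀ P ∈ transportPolytope n,
      (∑ i, ∑ j, (C i j * P0 i j + ε * (P0 i j * Real.log (P0 i j)))) ≤
        (∑ i, ∑ j, (C i j * P i j + ε * (P i j * Real.log (P i j)))) := by
    intro P hP
    have := hP0min P hP
    rwa [hJ, hJ] at this
  -- Step 2: first-order conditions along cycle directions
  have key : ∀ a a' b b' : Fin n,
      C a b / ε + Real.log (P0 a b) + (C a' b' / ε + Real.log (P0 a' b'))
        = C a b' / ε + Real.log (P0 a b') + (C a' b / ε + Real.log (P0 a' b)) := by
    intro a a' b b'
    rcases eq_or_ne a a' with rfl | haa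
    · ring
    rcases eq_or_ne b b' with rfl | hbb
    · ring
    -- δ : uniform lower bound on entries
    have hne : (Finset.univ : Finset (Fin n × Fin n)).Nonempty := by
      refine ⟨(a, b), Finset.mem_univ _⟩
    set δ : ℝ := Finset.univ.inf' hne (fun p : Fin n × Fin n => P0 p.1 p.2) with hδ_def
    have hδpos : 0 < δ := by
      rw [hδ_def, Finset.lt_inf'_iff]
      exact fun p _ => hpos p.1 p.2
    have hδle : ∀ i j, δ ≤ P0 i j := fun i j =>
      Finset.inf'_le _ (Finset.mem_univ ((i, j) : Fin n × Fin n))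
    -- direction
    set r : Fin n → ℝ := fun i => (if i = a then (1:ℝ) else 0) - (if i = a' then 1 else 0) with hr_def
    set c : Fin n → ℝ := fun j => (if j = b then (1:ℝ) else 0) - (if j = b' then 1 else 0) with hc_def
    have hrsum : ∑ i, r i = 0 := by simp [hr_def]
    have hcsum : ∑ j, c j = 0 := by simp [hc_def]
    have hrabs : ∀ i, |r i| ≤ 1 := by
      intro i; rw [hr_def]; dsimp only; split_ifs <;> norm_num
    have hcabs : ∀ j, |c j| ≤ 1 := by
      intro j; rw [hc_def]; dsimp only; split_ifs <;> norm_num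
    set Q : ℝ → Matrix (Fin n) (Fin n) ℝ :=
      fun t => Matrix.of fun i j => P0 i j + t * (r i * c j) with hQ_def
    have hQentry : ∀ t i j, Q t i j = P0 i j + t * (r i * c j) := fun _ _ _ => rfl
    have hmem : ∀ t : ℝ, |t| ≤ δ → Q t ∈ transportPolytope n := by
      intro t ht
      refine ⟨fun i j => ?_, fun i => ?_, fun j => ?_⟩
      · rw [hQentry]
        have h1 : |t * (r i * c j)| ≤ δ := by
          rw [abs_mul, abs_mul]
          calc |t| * (|r i| * |c j|) ≤ δ * (1 * 1) := by
                refine mul_le_mul ht ?_ (by positivity) hδpos.le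
                exact mul_le_mul (hrabs i) (hcabs j) (abs_nonneg _) zero_le_one
            _ = δ := by ring
        have h2 := abs_le.1 h1
        have := hδle i j
        linarith [h2.1]
      · simp only [hQentry, Finset.sum_add_distrib, hrow i, ← Finset.mul_sum, hcsum]
        ring
      · simp only [hQentry, Finset.sum_add_distrib, hcol j, ← Finset.mul_sum]
        have h9 : ∑ i, r i * c j = (∑ i, r i) * c j := by
          rw [Finset.sum_mul]
        rw [h9, hrsum]
        ring
    -- g and its derivative
    set g : ℝ → ℝ := fun t => ∑ i, ∑ j,
      (C i j * Q t i j + ε * (Q t i j * Real.log (Q t i j))) with hg_def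
    have hder : HasDerivAt g
        (∑ i, ∑ j, (C i j + ε * (Real.log (P0 i j) + 1)) * (r i * c j)) 0 := by
      rw [hg_def]
      refine HasDerivAt.fun_sum fun i _ => HasDerivAt.fun_sum fun j _ => ?_
      have hlin : HasDerivAt (fun t : ℝ => P0 i j + t * (r i * c j)) (r i * c j) 0 := by
        simpa using ((hasDerivAt_id (0:ℝ)).mul_const (r i * c j)).const_add (P0 i j)
      have hval : P0 i j + (0:ℝ) * (r i * c j) = P0 i j := by ring
      have hψ : HasDerivAt (fun t : ℝ => (P0 i j + t * (r i * c j)) *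
          Real.log (P0 i j + t * (r i * c j)))
          ((Real.log (P0 i j) + 1) * (r i * c j)) 0 := by
        have hml : HasDerivAt (fun x : ℝ => x * Real.log x)
            (Real.log (P0 i j) + 1) ((fun t : ℝ => P0 i j + t * (r i * c j)) 0) := by
          rw [show (fun t : ℝ => P0 i j + t * (r i * c j)) 0 = P0 i j by simp]
          exact Real.hasDerivAt_mul_log (hpos i j).ne'
        exact hml.comp 0 hlin
      have := ((hlin.const_mul (C i j)).add (hψ.const_mul ε))
      convert this using 1
      · funext t; rfl
      ring
    have hloc : IsLocalMin g 0 := by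
      have hball : Metric.closedBall (0:ℝ) δ ∈ nhds (0:ℝ) :=
        Metric.closedBall_mem_nhds 0 hδpos
      refine Filter.eventually_of_mem hball fun t ht => ?_
      have habs : |t| ≤ δ := by
        simpa [Real.dist_eq] using Metric.mem_closedBall.1 ht
      have h0 : Q 0 = P0 := by
        ext i j; rw [hQentry]; ring
      have := hmin (Q t) (hmem t habs)
      simpa [hg_def, h0] using this
    have hzero := hloc.hasDerivAt_eq_zero hder
    -- evaluate the sum
    have hsum : (∑ i, ∑ j, (C i j + ε * (Real.log (P0 i j) + 1)) * (r i * c j))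
        = ((C a b + ε * (Real.log (P0 a b) + 1)) + (C a' b' + ε * (Real.log (P0 a' b') + 1)))
          - ((C a b' + ε * (Real.log (P0 a b') + 1)) + (C a' b + ε * (Real.log (P0 a' b) + 1))) := by
      have hinner : ∀ i, (∑ j, (C i j + ε * (Real.log (P0 i j) + 1)) * (r i * c j))
          = r i * ((C i b + ε * (Real.log (P0 i b) + 1)) - (C i b' + ε * (Real.log (P0 i b') + 1))) := by
        intro i
        rw [hc_def]
        simp only [mul_sub, mul_ite, mul_one, mul_zero, Finset.sum_sub_distrib]
        rw [Finset.sum_ite_eq' Finset.univ b, Finset.sum_ite_eq' Finset.univ b']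
        simp
        ring
      rw [Finset.sum_congr rfl fun i _ => hinner i]
      rw [hr_def]
      simp only [sub_mul, ite_mul, one_mul, zero_mul, Finset.sum_sub_distrib]
      rw [Finset.sum_ite_eq' Finset.univ a, Finset.sum_ite_eq' Finset.univ a']
      simp
      ring
    rw [hsum] at hzero
    have hεne : ε ≠ 0 := hε.ne'
    field_simp
    nlinarith [hzero]
  -- Step 3: assemble u and v
  set i0 : Fin n := ⟨0, hn⟩ with hi0
  refine ⟨fun i => Real.exp (C i i0 / ε + Real.log (P0 i i0)
      - (C i0 i0 / ε + Real.log (P0 i0 i0))),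
    fun j => Real.exp (C i0 j / ε + Real.log (P0 i0 j)),
    fun i => Real.exp_pos _, fun j => Real.exp_pos _, fun i j => ?_⟩
  rw [← Real.exp_add, ← Real.exp_add, ← Real.exp_log (hpos i j)]
  congr 1
  have hk := key i i0 j i0
  have hnd : -C i j / ε = -(C i j / ε) := neg_div _ _
  linarith
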